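/- The endomorphism φ of the Klein bottle group ℤ ⋊ ℤ = ⟨x, y | y⁻¹xy = x⁻¹⟩ defined by φ(x) = x² and φ(y) = y³ is injective and has Reidemeister number R(φ) = 4. -/

import Mathlib

/-- Twisted conjugacy: `α` and `α'` are `φ`-conjugate if `α' = γ * α * φ(γ)⁻¹`
for some `γ`. -/
def twistedConj {G : Type*} [Group G] (φ : G →* G) (α α' : G) : Prop :=
  ∃ γ : G, α' = γ * α * (φ γ)⁻¹

/-- The action of `ℤ` on `ℤ` where the generator `1` acts by multiplication by `-1`. -/
def kbAction : Multiplicative ℤ →* MulAut (Multiplicative ℤ) :=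
  zpowersHom _ (MulEquiv.inv (Multiplicative ℤ))

/-- The Klein bottle group `ℤ ⋊ ℤ = ⟨x, y | y⁻¹ x y = x⁻¹⟩`, with the generator of the
second factor acting on the first by multiplication by `-1`. -/
abbrev KleinBottleGroup : Type := Multiplicative ℤ ⋊[kbAction] Multiplicative ℤ

/-- The generator `x` of the Klein bottle group. -/
def kbX : KleinBottleGroup := SemidirectProduct.inl (Multiplicative.ofAdd 1)

/-- The generator `y` of the Klein bottle group. -/
def kbY : KleinBottleGroup := SemidirectProduct.inr (Multiplicative.ofAdd 1)

open Multiplicative SemidirectProduct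

private lemma act_eq : ∀ (d a : ℤ), kbAction (ofAdd d) (ofAdd a) = ofAdd ((d.negOnePow : ℤ) * a) := by
  intro d
  induction d using Int.induction_on with
  | zero => intro a; simp [kbAction]
  | succ k ih =>
      intro a
      have h0 : kbAction (ofAdd ((k : ℤ) + 1)) = kbAction (ofAdd (k : ℤ)) * kbAction (ofAdd 1) := by
        rw [← map_mul]; rfl
      rw [h0]
      have h1 : kbAction (ofAdd (1 : ℤ)) (ofAdd a) = ofAdd (-a) := by simp [kbAction]
      show kbAction (ofAdd (k:ℤ)) (kbAction (ofAdd (1:ℤ)) (ofAdd a)) = _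
      rw [h1, ih (-a), Int.negOnePow_succ]
      push_cast; ring_nf
  | pred k ih =>
      intro a
      have h0 : kbAction (ofAdd (-(k : ℤ) - 1)) = kbAction (ofAdd (-(k : ℤ))) * kbAction (ofAdd (-1)) := by
        rw [← map_mul]; congr 1
      rw [h0]
      have h1 : kbAction (ofAdd (-1 : ℤ)) (ofAdd a) = ofAdd (-a) := rfl
      show kbAction (ofAdd (-(k:ℤ))) (kbAction (ofAdd (-1:ℤ)) (ofAdd a)) = _
      rw [h1, ih (-a)]
      have h2 : (-(k:ℤ) - 1).negOnePow = -(-(k:ℤ)).negOnePow := by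
        rw [Int.negOnePow_sub]; simp
      rw [h2]; push_cast; ring_nf

private lemma npw_mul (x y : ℤ) : (x.negOnePow : ℤ) * (y.negOnePow : ℤ) = ((x + y).negOnePow : ℤ) := by
  rw [Int.negOnePow_add]; push_cast; ring

private lemma npw_eq {x y : ℤ} (h : Even (x - y)) : (x.negOnePow : ℤ) = (y.negOnePow : ℤ) :=
  congrArg Units.val ((Int.negOnePow_eq_iff x y).mpr h)

/-- shorthand -/
def km (a b : ℤ) : KleinBottleGroup := ⟨ofAdd a, ofAdd b⟩

private lemma km_surj (g : KleinBottleGroup) : g = km (toAdd g.left) (toAdd g.right) := by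
  cases g; rfl

private lemma km_inj {a b a' b' : ℤ} (h : km a b = km a' b') : a = a' ∧ b = b' := by
  simpa [km, SemidirectProduct.ext_iff] using h

private lemma km_mul (a b a' b' : ℤ) :
    km a b * km a' b' = km (a + (b.negOnePow : ℤ) * a') (b + b') := by
  have hl := mul_left (km a b) (km a' b')
  have hr := mul_right (km a b) (km a' b')
  apply SemidirectProduct.ext
  · rw [hl]; show ofAdd a * kbAction (ofAdd b) (ofAdd a') = _
    rw [act_eq, ← ofAdd_add]; rfl
  · rw [hr]; rfl

private lemma km_inv (a b : ℤ) : (km a b)⁻¹ = km (-((b.negOnePow : ℤ) * a)) (-b) := by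
  apply SemidirectProduct.ext
  · rw [inv_left]
    show kbAction (ofAdd b)⁻¹ (ofAdd a)⁻¹ = _
    have : (ofAdd b)⁻¹ = ofAdd (-b) := rfl
    rw [this]
    have : (ofAdd a)⁻¹ = ofAdd (-a) := rfl
    rw [this, act_eq]
    congr 1
    rw [show (-b).negOnePow = b.negOnePow from Int.negOnePow_neg b]; ring
  · rfl

/-- The endomorphism x ↦ x², y ↦ y³. -/
def kbφ : KleinBottleGroup →* KleinBottleGroup :=
  SemidirectProduct.map (powMonoidHom 2) (powMonoidHom 3) (by
    intro g
    refine MonoidHom.ext fun n => ?_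
    show (kbAction g n) ^ 2 = kbAction (g ^ 3) (n ^ 2)
    apply toAdd.injective
    have h1 : kbAction g n = ofAdd (((toAdd g).negOnePow : ℤ) * toAdd n) := by
      rw [← act_eq (toAdd g) (toAdd n)]; simp
    have hg3 : g ^ 3 = ofAdd (3 * toAdd g) := by
      apply toAdd.injective; simp [toAdd_pow]; ring
    have hn2 : n ^ 2 = ofAdd (2 * toAdd n) := by
      apply toAdd.injective; simp [toAdd_pow]; ring
    have h2 : kbAction (g ^ 3) (n ^ 2) = ofAdd (((3 * toAdd g).negOnePow : ℤ) * (2 * toAdd n)) := by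
      rw [hg3, hn2]; exact act_eq _ _
    rw [h1, h2, toAdd_pow]
    have h3 : ((3 * toAdd g).negOnePow : ℤ) = ((toAdd g).negOnePow : ℤ) :=
      npw_eq ⟨toAdd g, by ring⟩
    rw [h3]; simp only [toAdd_ofAdd]; ring)

private lemma kbφ_km (a b : ℤ) : kbφ (km a b) = km (2 * a) (3 * b) := by
  apply SemidirectProduct.ext
  · show powMonoidHom 2 (ofAdd a) = ofAdd (2 * a)
    apply toAdd.injective; simp [powMonoidHom, toAdd_pow]; ring
  · show powMonoidHom 3 (ofAdd b) = ofAdd (3 * b)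
    apply toAdd.injective; simp [powMonoidHom, toAdd_pow]; ring

private lemma conj_formula (c d a b : ℤ) :
    km c d * km a b * (kbφ (km c d))⁻¹ =
      km (c + (d.negOnePow : ℤ) * a - (b.negOnePow : ℤ) * (2 * c)) (b - 2 * d) := by
  rw [kbφ_km, km_inv, km_mul, km_mul]
  have e1 : ((d + b).negOnePow : ℤ) * ((3 * d).negOnePow : ℤ) = (b.negOnePow : ℤ) := by
    rw [npw_mul]; exact npw_eq ⟨2 * d, by ring⟩
  congr 1
  · linear_combination (-(2:ℤ) * c) * e1
  · ring

private lemma twisted_iff (a b a' b' : ℤ) :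
    twistedConj kbφ (km a b) (km a' b') ↔
      ∃ c d : ℤ, a' = c + (d.negOnePow : ℤ) * a - (b.negOnePow : ℤ) * (2 * c) ∧ b' = b - 2 * d := by
  constructor
  · rintro ⟨γ, hγ⟩
    refine ⟨toAdd γ.left, toAdd γ.right, ?_⟩
    rw [km_surj γ, conj_formula] at hγ
    exact km_inj hγ
  · rintro ⟨c, d, h1, h2⟩
    exact ⟨km c d, by rw [conj_formula, h1, h2]⟩

/-- Invariant in `ZMod 3` for odd second coordinate. -/
def inv3 (a b : ℤ) : ZMod 3 := ((((b - 1) / 2).negOnePow : ℤ) * a : ℤ)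

/-- Classifying map to `Fin 4`. -/
def cls (g : KleinBottleGroup) : Fin 4 :=
  if Even (toAdd g.right) then 0
  else ⟨(inv3 (toAdd g.left) (toAdd g.right)).val + 1, by
    have := (inv3 (toAdd g.left) (toAdd g.right)).val_lt; omega⟩

private lemma cls_km (a b : ℤ) :
    cls (km a b) = if Even b then 0 else
      ⟨(inv3 a b).val + 1, by have := (inv3 a b).val_lt; omega⟩ := rfl

private lemma cls_const {g g' : KleinBottleGroup} (h : twistedConj kbφ g g') :
    cls g = cls g' := by
  rw [km_surj g, km_surj g'] at h ⊢
  set a := toAdd g.left; set b := toAdd g.right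
  set a' := toAdd g'.left; set b' := toAdd g'.right
  obtain ⟨c, d, ha, hb⟩ := (twisted_iff a b a' b').mp h
  rw [cls_km, cls_km]
  have hpar : Even b' ↔ Even b := by rw [Int.even_iff, Int.even_iff]; omega
  by_cases hev : Even b
  · rw [if_pos hev, if_pos (hpar.mpr hev)]
  · rw [if_neg hev, if_neg (fun hc => hev (hpar.mp hc))]
    have hodd : Odd b := Int.not_even_iff_odd.mp hev
    have hb1 : ((b.negOnePow : ℤ)) = -1 := by
      rw [Int.negOnePow_odd b hodd]; rfl
    obtain ⟨k, hk⟩ := hodd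
    have hinv : inv3 a' b' = inv3 a b := by
      unfold inv3
      have e1 : (b' - 1) / 2 = k - d := by omega
      have e2 : (b - 1) / 2 = k := by omega
      rw [e1, e2]
      rw [ZMod.intCast_eq_intCast_iff]
      apply Int.ModEq.symm
      rw [Int.modEq_iff_dvd]
      have e3 : ((k - d).negOnePow : ℤ) * (d.negOnePow : ℤ) = (k.negOnePow : ℤ) := by
        rw [npw_mul]; congr 2; ring
      refine ⟨(((k - d).negOnePow : ℤ)) * c, ?_⟩
      rw [ha, hb1]
      push_cast
      linear_combination (a : ℤ) * e3
    exact Fin.ext (congrArg (fun z => z.val + 1) hinv.symm)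

private lemma cls_complete {g g' : KleinBottleGroup} (h : cls g = cls g') :
    twistedConj kbφ g g' := by
  rw [km_surj g, km_surj g'] at h ⊢
  set a := toAdd g.left; set b := toAdd g.right
  set a' := toAdd g'.left; set b' := toAdd g'.right
  rw [cls_km, cls_km] at h
  rw [twisted_iff]
  by_cases hev : Even b <;> by_cases hev' : Even b'
  · -- both even
    obtain ⟨t, ht⟩ := hev; obtain ⟨t', ht'⟩ := hev'
    refine ⟨(((b - b') / 2).negOnePow : ℤ) * a - a', (b - b') / 2, ?_, by omega⟩
    have hb1 : ((b.negOnePow : ℤ)) = 1 := by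
      rw [Int.negOnePow_even b ⟨t, ht⟩]; rfl
    rw [hb1]; ring
  · rw [if_pos hev, if_neg hev'] at h
    exact absurd (congrArg Fin.val h) (by simp)
  · rw [if_pos hev', if_neg hev] at h
    exact absurd (congrArg Fin.val h) (by simp)
  · rw [if_neg hev, if_neg hev'] at h
    have hodd : Odd b := Int.not_even_iff_odd.mp hev
    have hodd' : Odd b' := Int.not_even_iff_odd.mp hev'
    have hinv : inv3 a' b' = inv3 a b := by
      have hval : (inv3 a b).val = (inv3 a' b').val := by
        have h2 := congrArg Fin.val h; simpa using h2
      exact (ZMod.val_injective 3 hval).symm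
    obtain ⟨k, hk⟩ := hodd
    obtain ⟨k', hk'⟩ := hodd'
    set d := (b - b') / 2 with hd
    have hkd : k' = k - d := by omega
    have hdvd : (3 : ℤ) ∣ a' - (d.negOnePow : ℤ) * a := by
      unfold inv3 at hinv
      have e1 : (b' - 1) / 2 = k - d := by omega
      have e2 : (b - 1) / 2 = k := by omega
      rw [e1, e2, ZMod.intCast_eq_intCast_iff] at hinv
      have hdvd0 : (3 : ℤ) ∣ ((k.negOnePow : ℤ) * a - ((k - d).negOnePow : ℤ) * a') :=
        Int.ModEq.dvd hinv
      obtain ⟨m, hm⟩ := hdvd0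
      refine ⟨-(((k - d).negOnePow : ℤ)) * m, ?_⟩
      have e3 : ((k - d).negOnePow : ℤ) * ((k - d).negOnePow : ℤ) = 1 := by
        rw [npw_mul, Int.negOnePow_even _ ⟨k - d, rfl⟩]; rfl
      have e4 : ((k - d).negOnePow : ℤ) * (k.negOnePow : ℤ) = (d.negOnePow : ℤ) := by
        rw [npw_mul]; exact npw_eq ⟨k - d, by ring⟩
      linear_combination (-(((k - d).negOnePow : ℤ))) * hm + a * e4 - a' * e3
    obtain ⟨c, hc⟩ := hdvd
    refine ⟨c, d, ?_, by omega⟩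
    have hb1 : ((b.negOnePow : ℤ)) = -1 := by
      rw [Int.negOnePow_odd b ⟨k, hk⟩]; rfl
    rw [hb1]; linarith [hc]

private lemma cls_surj : Function.Surjective cls := by
  intro i
  fin_cases i
  · exact ⟨km 0 0, by simp [cls_km]⟩
  · refine ⟨km 0 1, ?_⟩
    rw [cls_km, if_neg (by decide)]
    have : inv3 0 1 = 0 := by unfold inv3; norm_num
    exact Fin.ext (show (inv3 0 1).val + 1 = 1 by rw [this]; rfl)
  · refine ⟨km 1 1, ?_⟩
    rw [cls_km, if_neg (by decide)]
    have : inv3 1 1 = 1 := by unfold inv3; norm_num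
    exact Fin.ext (show (inv3 1 1).val + 1 = 2 by rw [this]; rfl)
  · refine ⟨km 2 1, ?_⟩
    rw [cls_km, if_neg (by decide)]
    have : inv3 2 1 = 2 := by unfold inv3; norm_num
    exact Fin.ext (show (inv3 2 1).val + 1 = 3 by rw [this]; rfl)

private lemma kbφ_inj : Function.Injective kbφ := by
  intro g g' h
  rw [km_surj g, km_surj g'] at h ⊢
  rw [kbφ_km, kbφ_km] at h
  obtain ⟨h1, h2⟩ := km_inj h
  congr 1 <;> omega


/-- The endomorphism of the Klein bottle group defined by `x ↦ x²`, `y ↦ y³` is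
injective and has Reidemeister number `4`. -/
theorem kleinBottle_endo_reidemeister_four :
    ∃ φ : KleinBottleGroup →* KleinBottleGroup,
      φ kbX = kbX ^ 2 ∧ φ kbY = kbY ^ 3 ∧ Function.Injective φ ∧
        Nat.card (Quot (twistedConj φ)) = 4 := by
  refine ⟨kbφ, ?_, ?_, kbφ_inj, ?_⟩
  · show kbφ (inl (ofAdd 1)) = (inl (ofAdd 1) : KleinBottleGroup) ^ 2
    rw [← map_pow]
    show map _ _ _ _ = _
    rw [SemidirectProduct.map_inl]; rfl
  · show kbφ (inr (ofAdd 1)) = (inr (ofAdd 1) : KleinBottleGroup) ^ 3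
    rw [← map_pow]
    show map _ _ _ _ = _
    rw [SemidirectProduct.map_inr]; rfl
  · have hlift : ∀ (x y : KleinBottleGroup), twistedConj kbφ x y → cls x = cls y :=
      fun _ _ h => cls_const h
    have hbij : Function.Bijective (Quot.lift cls hlift) := by
      constructor
      · rintro ⟨x⟩ ⟨y⟩ hxy
        exact Quot.sound (cls_complete hxy)
      · intro i
        obtain ⟨g, hg⟩ := cls_surj i
        exact ⟨Quot.mk _ g, hg⟩
    exact Nat.card_eq_of_equiv_fin (Equiv.ofBijective _ hbij)
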